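/- Let H be a Hilbert algebra with supremum, G a generalized Heyting algebra, and f : H → G a map with f(1) = ⊤, f(a→b) = f(a) ⇨ f(b), and f(a∨b) = f(a) ⊔ f(b) for all a,b ∈ H. Then there exists a unique map h : FC(H) → G such that h(X(H)) = ⊤, h(U ∩ V) = h(U) ⊓ h(V) and h(U ∪ V) = h(U) ⊔ h(V) for all U,V ∈ FC(H) (note FC(H) is closed under binary unions), and h(φ(a)) = f(a) for all a ∈ H. -/

import Mathlib

/-- A Hilbert algebra `(H, →, 1)`. -/
structure HilbertAlgebra (H : Type*) where
  imp : H → H → H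
  one : H
  ax1 : ∀ a b : H, imp a (imp b a) = one
  ax2 : ∀ a b c : H, imp (imp a (imp b c)) (imp (imp a b) (imp a c)) = one
  ax3 : ∀ a b : H, imp a b = one → imp b a = one → a = b

namespace HilbertAlgebra

variable {H : Type*} (hH : HilbertAlgebra H)

/-- The natural order: `a ≤ b` iff `a → b = 1`. -/
def le (a b : H) : Prop := hH.imp a b = hH.one

/-- Implicative filter. -/
def IsImplicativeFilter (F : Set H) : Prop :=
  hH.one ∈ F ∧ ∀ a b : H, a ∈ F → hH.imp a b ∈ F → b ∈ F

/-- Irreducible implicative filter. -/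
def IsIrreducible (F : Set H) : Prop :=
  hH.IsImplicativeFilter F ∧ F ≠ Set.univ ∧
    ∀ F₁ F₂ : Set H, hH.IsImplicativeFilter F₁ → hH.IsImplicativeFilter F₂ →
      F = F₁ ∩ F₂ → (F = F₁ ∨ F = F₂)

/-- Order-ideal: nonempty, downward closed, up-directed (w.r.t. the natural order). -/
def IsOrderIdeal (I : Set H) : Prop :=
  I.Nonempty ∧ (∀ a b : H, b ∈ I → hH.le a b → a ∈ I) ∧
    ∀ a b : H, a ∈ I → b ∈ I → ∃ c ∈ I, hH.le a c ∧ hH.le b c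

/-- `φ(a) = {P ∈ X(H) : a ∈ P}`. -/
def phi (a : H) : Set (Set H) := {P | hH.IsIrreducible P ∧ a ∈ P}

/-- An upset of `X(H)` (the poset of irreducible implicative filters, ordered by `⊆`). -/
def IsUpsetX (U : Set (Set H)) : Prop :=
  (∀ P ∈ U, hH.IsIrreducible P) ∧
    ∀ P Q : Set H, P ∈ U → hH.IsIrreducible Q → P ⊆ Q → Q ∈ U

/-- The Heyting implication `U ⇒ V` on upsets of `X(H)`. -/
def impUps (U V : Set (Set H)) : Set (Set H) :=
  {P | hH.IsIrreducible P ∧ ∀ Q : Set H, hH.IsIrreducible Q → P ⊆ Q → Q ∈ U → Q ∈ V}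

/-- `FC(H)`: finite nonempty intersections of sets of the form `φ(a)`. -/
def FC : Set (Set (Set H)) :=
  {U | ∃ l : List H, l ≠ [] ∧ U = ⋂ a ∈ l, hH.phi a}

/-- `X*(H)`: implicative filters that are intersections of finitely many (at least one)
irreducible implicative filters. -/
def XStar : Set (Set H) :=
  {F | ∃ S : Set (Set H), S.Finite ∧ S.Nonempty ∧ (∀ P ∈ S, hH.IsIrreducible P) ∧ F = ⋂₀ S}

/-- `Φ(a) = {F ∈ X*(H) : a ∈ F}`. -/
def Phi (a : H) : Set (Set H) := {F | F ∈ hH.XStar ∧ a ∈ F}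

/-- An upset of `X*(H)` (ordered by `⊆`). -/
def IsUpsetXStar (U : Set (Set H)) : Prop :=
  (∀ F ∈ U, F ∈ hH.XStar) ∧
    ∀ F K : Set H, F ∈ U → K ∈ hH.XStar → F ⊆ K → K ∈ U

/-- The implication `U ⇒ V` on upsets of `X*(H)`. -/
def impUpsStar (U V : Set (Set H)) : Set (Set H) :=
  {F | F ∈ hH.XStar ∧ ∀ K : Set H, K ∈ hH.XStar → F ⊆ K → K ∈ U → K ∈ V}

/-- Homomorphism of Hilbert algebras. -/
def IsHom {G : Type*} (hG : HilbertAlgebra G) (f : H → G) : Prop :=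
  f hH.one = hG.one ∧ ∀ a b : H, f (hH.imp a b) = hG.imp (f a) (f b)

end HilbertAlgebra

/-- A Hilbert algebra with supremum: `(H, ∨)` is a join-semilattice whose induced
order has greatest element `1`, and `a → b = 1` iff `a ∨ b = b`. -/
structure HilbertSup (H : Type*) extends HilbertAlgebra H where
  sup : H → H → H
  sup_comm : ∀ a b : H, sup a b = sup b a
  sup_assoc : ∀ a b c : H, sup (sup a b) c = sup a (sup b c)
  sup_idem : ∀ a : H, sup a a = a
  sup_one : ∀ a : H, sup a one = one
  imp_eq_one_iff : ∀ a b : H, imp a b = one ↔ sup a b = b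

/-- Morphism of Hilbert algebras with supremum. -/
def HilbertSup.IsHomSup {H G : Type*} (hH : HilbertSup H) (hG : HilbertSup G)
    (f : H → G) : Prop :=
  hH.toHilbertAlgebra.IsHom hG.toHilbertAlgebra f ∧
    ∀ a b : H, f (hH.sup a b) = hG.sup (f a) (f b)

/-- An implicative semilattice: a meet-semilattice with greatest element and a binary
operation `him` such that `a ⊓ b ≤ c ↔ a ≤ him b c`. -/
class ImplicativeSemilattice (G : Type*) extends SemilatticeInf G, OrderTop G where
  him : G → G → G
  inf_le_iff_le_him : ∀ a b c : G, a ⊓ b ≤ c ↔ a ≤ him b c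

/- ====================== Auxiliary development ====================== -/

namespace Stmt14Aux

open HilbertAlgebra

variable {H : Type*}

section Basic

variable (hA : HilbertAlgebra H)

lemma impF (u v : H) : hA.imp (hA.imp v u) hA.one = hA.one := by
  have h1 := hA.ax1 (hA.imp v u) u
  rwa [hA.ax1 u v] at h1

lemma imp_one' (a : H) : hA.imp a hA.one = hA.one :=
  hA.ax3 _ _ (impF hA hA.one a) (hA.ax1 hA.one a)

lemma strip {t : H} (h : hA.imp hA.one t = hA.one) : t = hA.one :=
  hA.ax3 _ _ (imp_one' hA t) h

lemma imp_refl (a : H) : hA.imp a a = hA.one := by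
  have h := hA.ax2 a (hA.imp a a) a
  rw [hA.ax1 a (hA.imp a a), hA.ax1 a a] at h
  exact strip hA (strip hA h)

lemma one_imp (a : H) : hA.imp hA.one a = a := by
  refine hA.ax3 _ _ ?_ (hA.ax1 a hA.one)
  have h := hA.ax2 (hA.imp hA.one a) hA.one a
  rw [imp_refl hA (hA.imp hA.one a), imp_one' hA (hA.imp hA.one a)] at h
  exact strip hA (strip hA h)

lemma imp_trans {a b c : H} (hab : hA.imp a b = hA.one) (hbc : hA.imp b c = hA.one) :
    hA.imp a c = hA.one := by
  have h := hA.ax2 a b c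
  rw [hbc, imp_one' hA a, one_imp hA, hab, one_imp hA] at h
  exact h

lemma imp_mono {x y : H} (z : H) (h : hA.imp x y = hA.one) :
    hA.imp (hA.imp z x) (hA.imp z y) = hA.one := by
  have h2 := hA.ax2 z x y
  rw [h, imp_one' hA z, one_imp hA] at h2
  exact h2

lemma imp_anti {x y : H} (z : H) (h : hA.imp x y = hA.one) :
    hA.imp (hA.imp y z) (hA.imp x z) = hA.one := by
  have s := hA.ax2 x y z
  rw [h, one_imp hA] at s
  exact imp_trans hA (hA.ax1 (hA.imp y z) x) s

lemma exchange (a b c : H) : hA.imp a (hA.imp b c) = hA.imp b (hA.imp a c) := by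
  have key : ∀ x y z : H,
      hA.imp (hA.imp x (hA.imp y z)) (hA.imp y (hA.imp x z)) = hA.one := by
    intro x y z
    exact imp_trans hA (hA.ax2 x y z) (imp_anti hA (hA.imp x z) (hA.ax1 y x))
  exact hA.ax3 _ _ (key a b c) (key b a c)

lemma le_imp_self (a b : H) : hA.imp a (hA.imp (hA.imp a b) b) = hA.one := by
  rw [exchange hA]; exact imp_refl hA _

/-- `imps [a₁,…,aₙ] x = a₁ → (a₂ → ⋯ (aₙ → x))`. -/
def imps (l : List H) (x : H) : H := l.foldr hA.imp x

@[simp] lemma imps_nil (x : H) : imps hA [] x = x := rfl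

@[simp] lemma imps_cons (a : H) (l : List H) (x : H) :
    imps hA (a :: l) x = hA.imp a (imps hA l x) := rfl

lemma imps_one (l : List H) : imps hA l hA.one = hA.one := by
  induction l with
  | nil => rfl
  | cons a t ih => rw [imps_cons, ih, imp_one' hA]

lemma le_imps (l : List H) (x : H) : hA.imp x (imps hA l x) = hA.one := by
  induction l with
  | nil => exact imp_refl hA x
  | cons a t ih => exact imp_trans hA ih (hA.ax1 (imps hA t x) a)

lemma imps_of_mem {l : List H} {a : H} (h : a ∈ l) : imps hA l a = hA.one := by
  induction l with
  | nil => cases h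
  | cons b t ih =>
    rcases List.mem_cons.1 h with h1 | h2
    · subst h1; exact le_imps hA t a
    · rw [imps_cons, ih h2, imp_one' hA]

lemma imps_distrib (l : List H) (x y : H) :
    hA.imp (imps hA l (hA.imp x y)) (hA.imp (imps hA l x) (imps hA l y)) = hA.one := by
  induction l with
  | nil => exact imp_refl hA _
  | cons a t ih =>
    exact imp_trans hA (imp_mono hA a ih) (hA.ax2 a (imps hA t x) (imps hA t y))

lemma imps_mp {l : List H} {x y : H} (h1 : imps hA l (hA.imp x y) = hA.one)
    (h2 : imps hA l x = hA.one) : imps hA l y = hA.one := by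
  have h := imps_distrib hA l x y
  rw [h1, one_imp hA, h2, one_imp hA] at h
  exact h

end Basic

section Filters

variable (hA : HilbertAlgebra H)

lemma mem_of_le {F : Set H} (hF : hA.IsImplicativeFilter F) {a b : H}
    (ha : a ∈ F) (h : hA.imp a b = hA.one) : b ∈ F :=
  hF.2 a b ha (h ▸ hF.1)

lemma relFilter_isFilter {F : Set H} (hF : hA.IsImplicativeFilter F) (c : H) :
    hA.IsImplicativeFilter {x | hA.imp c x ∈ F} := by
  constructor
  · show hA.imp c hA.one ∈ F
    rw [imp_one' hA]; exact hF.1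
  · intro a b ha hab
    have hs : hA.imp c (hA.imp a b) ∈ F := hab
    have h2 := hF.2 _ _ hs (hA.ax2 c a b ▸ hF.1)
    exact hF.2 _ _ ha h2

lemma imps_elim {F : Set H} (hF : hA.IsImplicativeFilter F) {l : List H}
    (hl : ∀ a ∈ l, a ∈ F) {x : H} (hx : imps hA l x ∈ F) : x ∈ F := by
  induction l with
  | nil => exact hx
  | cons a t ih =>
    exact ih (fun b hb => hl b (List.mem_cons_of_mem a hb))
      (hF.2 a _ (hl a (List.mem_cons_self)) hx)

lemma imps_filter (l : List H) :
    hA.IsImplicativeFilter {x | imps hA l x = hA.one} :=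
  ⟨imps_one hA l, fun a b ha hab => imps_mp hA hab ha⟩

/-- Separation: if `b` is not in the filter generated by `l`, there is an irreducible
implicative filter containing `l` and avoiding `b`. -/
lemma separation (l : List H) (b : H) (h : imps hA l b ≠ hA.one) :
    ∃ P : Set H, hA.IsIrreducible P ∧ (∀ a ∈ l, a ∈ P) ∧ b ∉ P := by
  classical
  set S : Set (Set H) :=
    {F | hA.IsImplicativeFilter F ∧ (∀ a ∈ l, a ∈ F) ∧ b ∉ F} with hS
  have hD : {x | imps hA l x = hA.one} ∈ S :=
    ⟨imps_filter hA l, fun a ha => imps_of_mem hA ha, h⟩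
  have hchainub : ∀ c ⊆ S, IsChain (· ⊆ ·) c → c.Nonempty →
      ∃ ub ∈ S, ∀ s ∈ c, s ⊆ ub := by
    intro c hcS hchain hcne
    obtain ⟨F0, hF0⟩ := hcne
    refine ⟨⋃₀ c, ⟨⟨⟨F0, hF0, (hcS hF0).1.1⟩, ?_⟩,
      fun a ha => ⟨F0, hF0, (hcS hF0).2.1 a ha⟩, ?_⟩,
      fun s hs => Set.subset_sUnion_of_mem hs⟩
    · rintro x y ⟨F₁, hF₁, hx⟩ ⟨F₂, hF₂, hxy⟩
      rcases hchain.total hF₁ hF₂ with hle | hle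
      · exact ⟨F₂, hF₂, (hcS hF₂).1.2 x y (hle hx) hxy⟩
      · exact ⟨F₁, hF₁, (hcS hF₁).1.2 x y hx (hle hxy)⟩
    · rintro ⟨F₁, hF₁, hbF⟩
      exact (hcS hF₁).2.2 hbF
  obtain ⟨M, _, hM⟩ := zorn_subset_nonempty S hchainub _ hD
  refine ⟨M, ⟨hM.1.1, ?_, ?_⟩, hM.1.2.1, hM.1.2.2⟩
  · intro hu
    exact hM.1.2.2 (hu ▸ Set.mem_univ b)
  · intro F₁ F₂ hF₁ hF₂ hEq
    by_contra hcon
    push_neg at hcon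
    have hsub1 : M ⊆ F₁ := hEq ▸ Set.inter_subset_left
    have hsub2 : M ⊆ F₂ := hEq ▸ Set.inter_subset_right
    have hb1 : b ∈ F₁ := by
      by_contra hb
      exact hcon.1 (Set.Subset.antisymm hsub1
        (hM.2 ⟨hF₁, fun a ha => hsub1 (hM.1.2.1 a ha), hb⟩ hsub1))
    have hb2 : b ∈ F₂ := by
      by_contra hb
      exact hcon.2 (Set.Subset.antisymm hsub2
        (hM.2 ⟨hF₂, fun a ha => hsub2 (hM.1.2.1 a ha), hb⟩ hsub2))
    exact hM.1.2.2 (hEq ▸ (⟨hb1, hb2⟩ : b ∈ F₁ ∩ F₂))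

lemma subset_phi_of_mem {l : List H} {a : H} (ha : a ∈ l) :
    (⋂ c ∈ l, hA.phi c) ⊆ hA.phi a := by
  intro P hP
  exact Set.mem_iInter₂.1 hP a ha

lemma biInter_phi_subset_iff {l : List H} (hl : l ≠ []) (b : H) :
    (⋂ a ∈ l, hA.phi a) ⊆ hA.phi b ↔ imps hA l b = hA.one := by
  constructor
  · intro hsub
    by_contra hne
    obtain ⟨P, hPirr, hPl, hPb⟩ := separation hA l b hne
    have hPmem : P ∈ ⋂ a ∈ l, hA.phi a :=
      Set.mem_iInter₂.2 fun a ha => ⟨hPirr, hPl a ha⟩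
    exact hPb (hsub hPmem).2
  · intro h1 P hP
    obtain ⟨a0, t0⟩ : ∃ a0 t0, l = a0 :: t0 := by
      cases l with
      | nil => exact absurd rfl hl
      | cons a t => exact ⟨a, t, rfl⟩
    obtain ⟨t0, rfl⟩ := t0
    have h0 := Set.mem_iInter₂.1 hP
    have hPirr := (h0 a0 (List.mem_cons_self)).1
    refine ⟨hPirr, imps_elim hA hPirr.1 (fun a ha => (h0 a ha).2) ?_⟩
    rw [h1]; exact hPirr.1.1

end Filters

section Sup

variable (hS : HilbertSup H)

lemma le_sup_left' (a b : H) :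
    hS.toHilbertAlgebra.imp a (hS.sup a b) = hS.toHilbertAlgebra.one := by
  rw [hS.imp_eq_one_iff, ← hS.sup_assoc, hS.sup_idem]

lemma le_sup_right' (a b : H) :
    hS.toHilbertAlgebra.imp b (hS.sup a b) = hS.toHilbertAlgebra.one := by
  rw [hS.imp_eq_one_iff, hS.sup_comm b, hS.sup_assoc, hS.sup_idem]

lemma sup_le' {a b c : H} (h1 : hS.toHilbertAlgebra.imp a c = hS.toHilbertAlgebra.one)
    (h2 : hS.toHilbertAlgebra.imp b c = hS.toHilbertAlgebra.one) :
    hS.toHilbertAlgebra.imp (hS.sup a b) c = hS.toHilbertAlgebra.one := by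
  rw [hS.imp_eq_one_iff] at h1 h2 ⊢
  rw [hS.sup_assoc, h2, h1]

/-- Key identity: `(a→x) → ((b→x) → ((a∨b)→x)) = 1`. -/
lemma sup_imp_key (a b x : H) :
    hS.toHilbertAlgebra.imp (hS.toHilbertAlgebra.imp a x)
      (hS.toHilbertAlgebra.imp (hS.toHilbertAlgebra.imp b x)
        (hS.toHilbertAlgebra.imp (hS.sup a b) x)) = hS.toHilbertAlgebra.one := by
  set hA := hS.toHilbertAlgebra with hAdef
  set y := hA.imp (hA.imp b x) x with hy
  have hx_y : hA.imp x y = hA.one := hA.ax1 x (hA.imp b x)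
  have hb_y : hA.imp b y = hA.one := le_imp_self hA b x
  have step1 : hA.imp (hA.imp a x) (hA.imp a y) = hA.one := imp_mono hA a hx_y
  have h1 : hA.imp (hS.sup a y) (hA.imp (hA.imp a y) y) = hA.one :=
    sup_le' hS (le_imp_self hA a y) (hA.ax1 y (hA.imp a y))
  have h1' : hA.imp (hA.imp a y) (hA.imp (hS.sup a y) y) = hA.one := by
    rw [← exchange hA]; exact h1
  have h2 : hA.imp (hS.sup a b) (hS.sup a y) = hA.one :=
    sup_le' hS (le_sup_left' hS a y) (imp_trans hA hb_y (le_sup_right' hS a y))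
  have h3 : hA.imp (hA.imp (hS.sup a y) y) (hA.imp (hS.sup a b) y) = hA.one :=
    imp_anti hA y h2
  have chain : hA.imp (hA.imp a x) (hA.imp (hS.sup a b) y) = hA.one :=
    imp_trans hA step1 (imp_trans hA h1' h3)
  have hfin : hA.imp (hS.sup a b) y
      = hA.imp (hA.imp b x) (hA.imp (hS.sup a b) x) := by
    rw [hy, exchange hA]
  rw [hfin] at chain
  exact chain

/-- Irreducible implicative filters are prime w.r.t. the supremum. -/
lemma prime {P : Set H} (hP : hS.toHilbertAlgebra.IsIrreducible P) {a b : H}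
    (hab : hS.sup a b ∈ P) : a ∈ P ∨ b ∈ P := by
  set hA := hS.toHilbertAlgebra with hAdef
  by_contra hcon
  push_neg at hcon
  have hEq : P = {x | hA.imp a x ∈ P} ∩ {x | hA.imp b x ∈ P} := by
    apply Set.Subset.antisymm
    · intro x hx
      exact ⟨mem_of_le hA hP.1 hx (hA.ax1 x a), mem_of_le hA hP.1 hx (hA.ax1 x b)⟩
    · rintro x ⟨h1, h2⟩
      have hk : hA.imp (hA.imp a x) (hA.imp (hA.imp b x) (hA.imp (hS.sup a b) x)) ∈ P := by
        rw [sup_imp_key hS a b x]; exact hP.1.1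
      have h3 : hA.imp (hS.sup a b) x ∈ P := hP.1.2 _ _ h2 (hP.1.2 _ _ h1 hk)
      exact hP.1.2 _ _ hab h3
  rcases hP.2.2 _ _ (relFilter_isFilter hA hP.1 a) (relFilter_isFilter hA hP.1 b) hEq with
    h | h
  · exact hcon.1 (by rw [h]; show hA.imp a a ∈ P; rw [imp_refl hA]; exact hP.1.1)
  · exact hcon.2 (by rw [h]; show hA.imp b b ∈ P; rw [imp_refl hA]; exact hP.1.1)

lemma phi_sup (a b : H) :
    hS.toHilbertAlgebra.phi (hS.sup a b)
      = hS.toHilbertAlgebra.phi a ∪ hS.toHilbertAlgebra.phi b := by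
  set hA := hS.toHilbertAlgebra with hAdef
  ext P
  constructor
  · rintro ⟨hPirr, hmem⟩
    rcases prime hS hPirr hmem with h | h
    · exact Or.inl ⟨hPirr, h⟩
    · exact Or.inr ⟨hPirr, h⟩
  · rintro (⟨hPirr, h⟩ | ⟨hPirr, h⟩)
    · exact ⟨hPirr, mem_of_le hA hPirr.1 h (le_sup_left' hS a b)⟩
    · exact ⟨hPirr, mem_of_le hA hPirr.1 h (le_sup_right' hS a b)⟩

end Sup

section Gside

variable {G : Type*} [GeneralizedHeytingAlgebra G]

/-- `infsOf f [a₁,…,aₙ] = f a₁ ⊓ ⋯ ⊓ f aₙ ⊓ ⊤`. -/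
def infsOf (f : H → G) (l : List H) : G := l.foldr (fun a g => f a ⊓ g) ⊤

@[simp] lemma infsOf_nil (f : H → G) : infsOf f ([] : List H) = ⊤ := rfl

@[simp] lemma infsOf_cons (f : H → G) (a : H) (l : List H) :
    infsOf f (a :: l) = f a ⊓ infsOf f l := rfl

lemma infsOf_append (f : H → G) (l₁ l₂ : List H) :
    infsOf f (l₁ ++ l₂) = infsOf f l₁ ⊓ infsOf f l₂ := by
  induction l₁ with
  | nil => simp
  | cons a t ih => simp [ih, inf_assoc]

lemma le_infsOf (f : H → G) (l : List H) (x : G) (h : ∀ a ∈ l, x ≤ f a) :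
    x ≤ infsOf f l := by
  induction l with
  | nil => exact le_top
  | cons a t ih =>
    exact le_inf (h a (List.mem_cons_self))
      (ih fun b hb => h b (List.mem_cons_of_mem a hb))

lemma le_foldr_himp (f : H → G) (l : List H) (x c : G) :
    x ≤ l.foldr (fun a g => f a ⇨ g) c ↔ x ⊓ infsOf f l ≤ c := by
  induction l generalizing x with
  | nil => simp
  | cons a t ih =>
    simp only [List.foldr_cons, infsOf_cons, le_himp_iff, ih, inf_assoc]

lemma f_imps (hA : HilbertAlgebra H) (f : H → G)
    (hfimp : ∀ a b : H, f (hA.imp a b) = f a ⇨ f b) (l : List H) (b : H) :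
    f (imps hA l b) = l.foldr (fun a g => f a ⇨ g) (f b) := by
  induction l with
  | nil => rfl
  | cons a t ih => rw [imps_cons, hfimp, ih]; rfl

lemma infs_le_of_imps (hA : HilbertAlgebra H) (f : H → G)
    (hf1 : f hA.one = (⊤ : G)) (hfimp : ∀ a b : H, f (hA.imp a b) = f a ⇨ f b)
    {l : List H} {b : H} (h : imps hA l b = hA.one) : infsOf f l ≤ f b := by
  have h1 := f_imps hA f hfimp l b
  rw [h, hf1] at h1
  have h2 : (⊤ : G) ≤ l.foldr (fun a g => f a ⇨ g) (f b) := h1.le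
  have h3 := (le_foldr_himp f l ⊤ (f b)).1 h2
  rwa [top_inf_eq] at h3

lemma le_infs_sup_right (f : H → G) (l : List H) (x y : G)
    (h : ∀ a ∈ l, x ≤ f a ⊔ y) : x ≤ infsOf f l ⊔ y := by
  induction l with
  | nil => exact le_trans le_top le_sup_left
  | cons a t ih =>
    have h1 := le_inf (h a (List.mem_cons_self))
      (ih fun b hb => h b (List.mem_cons_of_mem a hb))
    rwa [← sup_inf_right, ← infsOf_cons] at h1

lemma le_sup_infs (f : H → G) (l₁ l₂ : List H) (x : G)
    (h : ∀ a ∈ l₁, ∀ b ∈ l₂, x ≤ f a ⊔ f b) :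
    x ≤ infsOf f l₁ ⊔ infsOf f l₂ := by
  apply le_infs_sup_right
  intro a ha
  rw [sup_comm]
  exact le_infs_sup_right f l₂ x (f a) fun b hb => by
    rw [sup_comm]; exact h a ha b hb

end Gside

lemma biInter_list_append {α β : Type*} (l₁ l₂ : List α) (s : α → Set β) :
    (⋂ a ∈ l₁ ++ l₂, s a) = (⋂ a ∈ l₁, s a) ∩ ⋂ a ∈ l₂, s a := by
  ext x
  simp [List.mem_append, or_imp, forall_and]

end Stmt14Aux

namespace Stmt14Aux

lemma biInter_list_cons {α β : Type*} (a : α) (l : List α) (s : α → Set β) :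
    (⋂ x ∈ (a :: l), s x) = s a ∩ ⋂ x ∈ l, s x := by
  ext x
  simp [or_imp, forall_and]

end Stmt14Aux

theorem stmt_14 {H G : Type*} (hH : HilbertSup H) [GeneralizedHeytingAlgebra G]
    (f : H → G) (hf1 : f hH.one = (⊤ : G))
    (hfimp : ∀ a b : H, f (hH.imp a b) = f a ⇨ f b)
    (hfsup : ∀ a b : H, f (hH.sup a b) = f a ⊔ f b) :
    ∃! h : hH.toHilbertAlgebra.FC → G,
      (∀ U : hH.toHilbertAlgebra.FC,
        (U : Set (Set H)) = {P : Set H | hH.toHilbertAlgebra.IsIrreducible P} → h U = ⊤) ∧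
      (∀ U V W : hH.toHilbertAlgebra.FC,
        (W : Set (Set H)) = (U : Set (Set H)) ∩ (V : Set (Set H)) → h W = h U ⊓ h V) ∧
      (∀ U V W : hH.toHilbertAlgebra.FC,
        (W : Set (Set H)) = (U : Set (Set H)) ∪ (V : Set (Set H)) → h W = h U ⊔ h V) ∧
      (∀ (a : H) (U : hH.toHilbertAlgebra.FC),
        (U : Set (Set H)) = hH.toHilbertAlgebra.phi a → h U = f a) := by
  classical
  open Stmt14Aux in
  let hA := hH.toHilbertAlgebra
  let rep : hA.FC → List H := fun U => U.2.choose
  have hrepne : ∀ U : hA.FC, rep U ≠ [] := fun U => U.2.choose_spec.1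
  have hrepeq : ∀ U : hA.FC, (U : Set (Set H)) = ⋂ a ∈ rep U, hA.phi a :=
    fun U => U.2.choose_spec.2
  have mono : ∀ l₁ l₂ : List H, l₁ ≠ [] →
      (⋂ a ∈ l₁, hA.phi a) ⊆ (⋂ a ∈ l₂, hA.phi a) →
      infsOf f l₁ ≤ infsOf f l₂ := by
    intro l₁ l₂ h1 hsub
    apply le_infsOf
    intro b hb
    apply infs_le_of_imps hA f hf1 hfimp
    exact (biInter_phi_subset_iff hA h1 b).1
      (hsub.trans (subset_phi_of_mem hA hb))
  have hval : ∀ (U : hA.FC) (l : List H), l ≠ [] →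
      (U : Set (Set H)) = ⋂ a ∈ l, hA.phi a →
      infsOf f (rep U) = infsOf f l := by
    intro U l hl hU
    have h1 : (⋂ a ∈ rep U, hA.phi a) = ⋂ a ∈ l, hA.phi a := by
      rw [← hrepeq U, hU]
    exact le_antisymm (mono _ _ (hrepne U) h1.subset) (mono _ _ hl h1.symm.subset)
  refine ⟨fun U => infsOf f (rep U), ⟨?_, ?_, ?_, ?_⟩, ?_⟩
  · -- h (X(H)) = ⊤
    intro U hU
    have hone : ∀ b ∈ rep U, b = hA.one := by
      intro b hb
      by_contra hbne
      have himps : imps hA [hA.one] b ≠ hA.one := by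
        have he : imps hA [hA.one] b = b := by
          rw [imps_cons, imps_nil, one_imp hA]
        rw [he]; exact hbne
      obtain ⟨P, hPirr, _, hPb⟩ := separation hA [hA.one] b himps
      have hPU : P ∈ (U : Set (Set H)) := by rw [hU]; exact hPirr
      rw [hrepeq U] at hPU
      exact hPb (Set.mem_iInter₂.1 hPU b hb).2
    refine le_antisymm le_top (le_infsOf f _ ⊤ ?_)
    intro a ha
    rw [hone a ha, hf1]
  · -- intersections
    intro U V W hW
    have hWeq : (W : Set (Set H)) = ⋂ a ∈ (rep U ++ rep V), hA.phi a := by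
      rw [hW, hrepeq U, hrepeq V, biInter_list_append]
    have hne : rep U ++ rep V ≠ [] := by
      intro hc
      exact hrepne U (List.append_eq_nil_iff.1 hc).1
    have hv := hval W _ hne hWeq
    rw [infsOf_append] at hv
    exact hv
  · -- unions
    intro U V W hW
    refine le_antisymm ?_ (sup_le ?_ ?_)
    · apply le_sup_infs
      intro a ha b hb
      rw [← hfsup a b]
      apply infs_le_of_imps hA f hf1 hfimp
      apply (biInter_phi_subset_iff hA (hrepne W) (hH.sup a b)).1
      rw [← hrepeq W, hW, phi_sup hH]
      have hUsub : (U : Set (Set H)) ⊆ hA.phi a := by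
        rw [hrepeq U]; exact subset_phi_of_mem hA ha
      have hVsub : (V : Set (Set H)) ⊆ hA.phi b := by
        rw [hrepeq V]; exact subset_phi_of_mem hA hb
      exact Set.union_subset_union hUsub hVsub
    · apply mono _ _ (hrepne U)
      rw [← hrepeq U, ← hrepeq W, hW]
      exact Set.subset_union_left
    · apply mono _ _ (hrepne V)
      rw [← hrepeq V, ← hrepeq W, hW]
      exact Set.subset_union_right
  · -- phi
    intro a U hU
    have hsing : (⋂ x ∈ ([a] : List H), hA.phi x) = hA.phi a := by simp
    have hv := hval U [a] (by simp) (hU.trans hsing.symm)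
    simpa using hv
  · -- uniqueness
    rintro h' ⟨_, p2', _, p4'⟩
    funext U
    suffices hs : ∀ (l : List H), l ≠ [] → ∀ U : hA.FC,
        (U : Set (Set H)) = ⋂ a ∈ l, hA.phi a → h' U = infsOf f l by
      exact hs (rep U) (hrepne U) U (hrepeq U)
    intro l
    induction l with
    | nil => exact fun hc => absurd rfl hc
    | cons a t ih =>
      intro _ U hU
      cases t with
      | nil =>
        have hsing : (⋂ x ∈ ([a] : List H), hA.phi x) = hA.phi a := by simp
        rw [p4' a U (hU.trans hsing)]
        simp
      | cons b t' =>
        have htne : (b :: t') ≠ [] := by simp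
        have hVmem : hA.phi a ∈ hA.FC := ⟨[a], by simp, by simp⟩
        have hWmem : (⋂ x ∈ (b :: t'), hA.phi x) ∈ hA.FC := ⟨b :: t', htne, rfl⟩
        have hsplit : (U : Set (Set H))
            = hA.phi a ∩ ⋂ x ∈ (b :: t'), hA.phi x := by
          rw [hU, biInter_list_cons]
        rw [p2' ⟨hA.phi a, hVmem⟩ ⟨_, hWmem⟩ U hsplit,
          p4' a ⟨hA.phi a, hVmem⟩ rfl, ih htne ⟨_, hWmem⟩ rfl]
        simp [infsOf_cons]
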